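/- arXiv:2012.12345 — 3 statements merged into one kernel-verified Lean document; each statement's English description precedes it below -/
import Mathlib

section
/- Let f(x) = (α + γN)·log(x/S0) + β(1-ρ)(N - R0 - x) - T0β with S0 > 0, N > 0, α ≥ 0, γ > 0, β > 0, 0 ≤ ρ < 1, R0, T0 ≥ 0. If f attains a strictly positive maximum value at x0 = (α+γN)/(β(1-ρ)), then the equation f(x) = 0 has exactly two solutions x1, x2 with 0 < x1 < x0 < x2. -/
open Set

theorem final_size_function_two_roots
    (S0 N R0 T0 α γ β ρ : ℝ)
    (hS0 : 0 < S0) (hN : 0 < N) (hR0 : 0 ≤ R0) (hT0 : 0 ≤ T0)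
    (hα : 0 ≤ α) (hγ : 0 < γ) (hβ : 0 < β) (hρ0 : 0 ≤ ρ) (hρ1 : ρ < 1)
    (f : ℝ → ℝ)
    (hf : ∀ x, f x = (α + γ * N) * Real.log (x / S0) + β * (1 - ρ) * (N - R0 - x) - T0 * β)
    (x0 : ℝ) (hx0 : x0 = (α + γ * N) / (β * (1 - ρ)))
    (hmax : ∀ x, 0 < x → f x ≤ f x0) (hpos : 0 < f x0) :
    ∃ x1 x2 : ℝ, 0 < x1 ∧ x1 < x0 ∧ x0 < x2 ∧ f x1 = 0 ∧ f x2 = 0 ∧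
      ∀ x, 0 < x → f x = 0 → x = x1 ∨ x = x2 := by
  set A := α + γ * N with hA_def
  set B := β * (1 - ρ) with hB_def
  have hA : 0 < A := by have : 0 < γ * N := mul_pos hγ hN; simp only [hA_def]; linarith
  have hBpos : 0 < B := mul_pos hβ (by linarith)
  set D := -(A * Real.log S0) + B * (N - R0) - T0 * β with hD_def
  set g : ℝ → ℝ := fun x => A * Real.log x + D - B * x with hg_def
  have hfg : ∀ x, 0 < x → f x = g x := by
    intro x hx
    rw [hf, hg_def]
    simp only
    rw [Real.log_div hx.ne' hS0.ne']
    ring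
  have hx0pos : 0 < x0 := by rw [hx0]; positivity
  -- continuity of g on positive reals
  have hgc : ContinuousOn g (Set.Ioi (0:ℝ)) := by
    intro x hx
    exact (((continuousAt_const.mul (Real.continuousAt_log (ne_of_gt hx))).add
      continuousAt_const).sub (continuousAt_const.mul continuousAt_id)).continuousWithinAt
  have hfc : ∀ s : Set ℝ, s ⊆ Set.Ioi (0:ℝ) → ContinuousOn f s := by
    intro s hs
    exact ((hgc.mono hs).congr fun x hx => hfg x (hs hx))
  -- derivative
  have hderiv : ∀ x : ℝ, 0 < x → deriv f x = A * x⁻¹ - B := by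
    intro x hx
    have heq : f =ᶠ[nhds x] g :=
      Filter.eventuallyEq_of_mem (Ioi_mem_nhds hx) fun y hy => hfg y hy
    rw [heq.deriv_eq]
    have h1 : HasDerivAt g (A * x⁻¹ - B) x := by
      have h2 := (((Real.hasDerivAt_log hx.ne').const_mul A).add_const D).sub
        ((hasDerivAt_id x).const_mul B)
      simp only [mul_one] at h2
      have e : g = ((fun x => A * Real.log x + D) - fun y => B * id y) := by
        funext y
        simp [hg_def]
      rw [e]
      exact h2
    exact h1.deriv
  -- strict monotonicity on (0, x0]
  have hmono : StrictMonoOn f (Set.Ioc 0 x0) := by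
    apply strictMonoOn_of_deriv_pos (convex_Ioc 0 x0)
      (hfc _ fun x hx => hx.1)
    intro x hx
    rw [interior_Ioc] at hx
    rw [hderiv x hx.1]
    have hxlt : x < A / B := by rw [← hx0]; exact hx.2
    have h1 : B < A / x := by
      rw [lt_div_iff₀ hx.1]
      calc B * x = x * B := mul_comm _ _
        _ < (A / B) * B := by exact mul_lt_mul_of_pos_right hxlt hBpos
        _ = A := by field_simp
    have : A * x⁻¹ = A / x := by rw [div_eq_mul_inv]
    linarith
  -- strict antitonicity on [x0, ∞)
  have hanti : StrictAntiOn f (Set.Ici x0) := by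
    apply strictAntiOn_of_deriv_neg (convex_Ici x0)
      (hfc _ fun x hx => lt_of_lt_of_le hx0pos hx)
    intro x hx
    rw [interior_Ici] at hx
    have hxpos : 0 < x := hx0pos.trans hx
    rw [hderiv x hxpos]
    have hxgt : A / B < x := by rw [← hx0]; exact hx
    have h1 : A / x < B := by
      rw [div_lt_iff₀ hxpos]
      calc A = (A / B) * B := by field_simp
        _ < x * B := mul_lt_mul_of_pos_right hxgt hBpos
        _ = B * x := mul_comm _ _
    have : A * x⁻¹ = A / x := by rw [div_eq_mul_inv]
    linarith
  -- a point below x0 where f is negative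
  set xa := min (x0 / 2) (Real.exp ((-1 - D) / A)) with hxa_def
  have hxa_pos : 0 < xa := lt_min (by linarith) (Real.exp_pos _)
  have hxa_lt : xa < x0 := (min_le_left _ _).trans_lt (by linarith)
  have hfxa : f xa < 0 := by
    rw [hfg xa hxa_pos]
    have h2 : Real.log xa ≤ (-1 - D) / A := by
      have := Real.log_le_log hxa_pos (min_le_right (x0 / 2) (Real.exp ((-1 - D) / A)))
      rwa [Real.log_exp] at this
    have h3 : A * Real.log xa ≤ -1 - D := by
      have := (le_div_iff₀ hA).mp h2
      linarith
    have h5 : 0 < B * xa := mul_pos hBpos hxa_pos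
    simp only [hg_def]
    linarith
  -- a point above x0 where f is negative
  set k := 2 * A / B with hk_def
  have hk : 0 < k := by positivity
  set E := A * (Real.log k - 1) + D with hE_def
  set xb := max (x0 + 1) (2 * E / B + 1) with hxb_def
  have hxb_gt : x0 < xb := lt_of_lt_of_le (by linarith) (le_max_left _ _)
  have hxb_pos : 0 < xb := hx0pos.trans hxb_gt
  have hfxb : f xb < 0 := by
    rw [hfg xb hxb_pos]
    have h1 : Real.log (xb / k) ≤ xb / k - 1 := Real.log_le_sub_one_of_pos (by positivity)
    have h2 : Real.log (xb / k) = Real.log xb - Real.log k :=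
      Real.log_div hxb_pos.ne' hk.ne'
    have hlog : Real.log xb ≤ xb / k - 1 + Real.log k := by linarith
    have h3 : A * (xb / k) = B / 2 * xb := by
      rw [hk_def]; field_simp
    have h4 : A * Real.log xb ≤ A * (xb / k - 1 + Real.log k) :=
      mul_le_mul_of_nonneg_left hlog hA.le
    have h5 : A * (xb / k - 1 + Real.log k) = B / 2 * xb + A * (Real.log k - 1) := by
      rw [← h3]; ring
    have h6 : 2 * E / B + 1 ≤ xb := le_max_right _ _
    have h7 : B * (2 * E / B) = 2 * E := by field_simp
    have h8 : B * (2 * E / B + 1) ≤ B * xb := mul_le_mul_of_nonneg_left h6 hBpos.le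
    have h9 : B / 2 * xb + B / 2 * xb = B * xb := by ring
    have h10 : B * (2 * E / B + 1) = B * (2 * E / B) + B := by ring
    simp only [hg_def]
    clear_value xb E k xa g D B A
    linarith [hE_def]
  -- existence of roots by IVT
  have hIcc1 : Set.Icc xa x0 ⊆ Set.Ioi (0:ℝ) := fun x hx => lt_of_lt_of_le hxa_pos hx.1
  have hIcc2 : Set.Icc x0 xb ⊆ Set.Ioi (0:ℝ) := fun x hx => lt_of_lt_of_le hx0pos hx.1
  obtain ⟨x1, hx1mem, hx1eq⟩ :=
    intermediate_value_Icc hxa_lt.le (hfc _ hIcc1) ⟨hfxa.le, hpos.le⟩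
  obtain ⟨x2, hx2mem, hx2eq⟩ :=
    intermediate_value_Icc' hxb_gt.le (hfc _ hIcc2) ⟨hfxb.le, hpos.le⟩
  have hx1pos : 0 < x1 := lt_of_lt_of_le hxa_pos hx1mem.1
  have hx1lt : x1 < x0 := lt_of_le_of_ne hx1mem.2 (by intro h; rw [h] at hx1eq; linarith)
  have hx2gt : x0 < x2 :=
    lt_of_le_of_ne hx2mem.1 (by intro h; rw [← h] at hx2eq; linarith)
  refine ⟨x1, x2, hx1pos, hx1lt, hx2gt, hx1eq, hx2eq, ?_⟩
  intro x hx hfx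
  rcases le_or_gt x x0 with hle | hgt
  · left
    exact hmono.injOn ⟨hx, hle⟩ ⟨hx1pos, hx1lt.le⟩ (by rw [hfx, hx1eq])
  · right
    exact hanti.injOn (le_of_lt hgt) (le_of_lt hx2gt) (by rw [hfx, hx2eq])
end

section
/- Let g^α(x) = (α + γN)·log(x/S0) + β(1-ρ)(N-R0-x) - T0β for parameters S0 > 0, N, β, γ > 0, 0 ≤ ρ < 1, R0, T0 ≥ 0. Suppose for each α ≥ 0 that g^α has a unique zero x1(α) in the interval (0, x0(α)) where x0(α) = (α+γN)/(β(1-ρ)), that g^α is strictly increasing on (0, x0(α)), and that x1(α) < S0. If α1 > α2 ≥ 0, then x1(α1) > x1(α2). -/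
open Set

theorem root_monotone_in_alpha
    (S0 N β γ ρ R0 T0 : ℝ)
    (hS0 : 0 < S0) (hN : 0 < N) (hβ : 0 < β) (hγ : 0 < γ)
    (hρ0 : 0 ≤ ρ) (hρ1 : ρ < 1) (hR0 : 0 ≤ R0) (hT0 : 0 ≤ T0)
    (g : ℝ → ℝ → ℝ)
    (hg : ∀ α x, g α x = (α + γ * N) * Real.log (x / S0) + β * (1 - ρ) * (N - R0 - x) - T0 * β)
    (x0 : ℝ → ℝ) (hx0 : ∀ α, x0 α = (α + γ * N) / (β * (1 - ρ)))
    (x1 : ℝ → ℝ)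
    (hroot : ∀ α ≥ (0:ℝ), x1 α ∈ Ioo 0 (x0 α) ∧ g α (x1 α) = 0 ∧
      (∀ x ∈ Ioo 0 (x0 α), g α x = 0 → x = x1 α))
    (hmono : ∀ α ≥ (0:ℝ), StrictMonoOn (g α) (Ioo 0 (x0 α)))
    (hlt : ∀ α ≥ (0:ℝ), x1 α < S0)
    (α1 α2 : ℝ) (hα2 : 0 ≤ α2) (hα : α1 > α2) :
    x1 α1 > x1 α2 := by
  have hα1 : (0:ℝ) ≤ α1 := le_of_lt (lt_of_le_of_lt hα2 hα)
  obtain ⟨h2mem, h2zero, -⟩ := hroot α2 hα2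
  obtain ⟨h1mem, h1zero, -⟩ := hroot α1 hα1
  have hβρ : 0 < β * (1 - ρ) := mul_pos hβ (by linarith)
  have hx0lt : x0 α2 < x0 α1 := by
    rw [hx0, hx0]
    exact (div_lt_div_iff_of_pos_right hβρ).mpr (by linarith)
  have h2mem' : x1 α2 ∈ Ioo 0 (x0 α1) := ⟨h2mem.1, lt_trans h2mem.2 hx0lt⟩
  -- log (x1 α2 / S0) < 0
  have hlog : Real.log (x1 α2 / S0) < 0 := by
    apply Real.log_neg (div_pos h2mem.1 hS0)
    rw [div_lt_one hS0]
    exact hlt α2 hα2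
  -- g α1 at x1 α2 is negative
  have hneg : g α1 (x1 α2) < 0 := by
    have := h2zero
    rw [hg] at this ⊢
    nlinarith [hlog]
  -- conclude by strict monotonicity on (0, x0 α1)
  by_contra hcon
  push_neg at hcon
  rcases eq_or_lt_of_le hcon with heq | hltx
  · rw [← heq] at hneg
    linarith [h1zero ▸ hneg]
  · have := hmono α1 hα1 h1mem h2mem' hltx
    rw [h1zero] at this
    linarith
end

section
/- Let R₀ = (1/γ)(β(1-ρ) - α/N) with σ, γ, β, N > 0, α ≥ 0, 0 ≤ ρ < 1, and let a₂ = σ + 2γ + α/N, a₁ = (σ+γ)(α/N + γ) + σγ, a₀ = σγ(α/N + γ - β(1-ρ)). Then all roots of λ³ + a₂λ² + a₁λ + a₀ have negative real part if and only if R₀ < 1. -/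
set_option maxHeartbeats 1000000

/-- A quadratic `z² + b z + c` with positive real coefficients has all roots
with negative real part. -/
lemma quad_root_neg_re (b c : ℝ) (hb : 0 < b) (hc : 0 < c) (z : ℂ)
    (h : z ^ 2 + (b : ℂ) * z + (c : ℂ) = 0) : z.re < 0 := by
  by_contra hre
  push_neg at hre
  have h1 := congrArg Complex.re h
  have h2 := congrArg Complex.im h
  simp [pow_two, Complex.add_re, Complex.add_im, Complex.mul_re, Complex.mul_im] at h1 h2
  have hy : z.im * (2 * z.re + b) = 0 := by linear_combination h2
  rcases mul_eq_zero.mp hy with hy0 | hy0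
  · rw [hy0] at h1; nlinarith
  · linarith

theorem cubic_stable_iff_R0_lt_one
    (σ γ β N α ρ : ℝ) (hσ : 0 < σ) (hγ : 0 < γ) (hβ : 0 < β) (hN : 0 < N)
    (hα : 0 ≤ α) (hρ0 : 0 ≤ ρ) (hρ1 : ρ < 1)
    (R₀ a₂ a₁ a₀ : ℝ)
    (hR₀ : R₀ = (1 / γ) * (β * (1 - ρ) - α / N))
    (ha₂ : a₂ = σ + 2 * γ + α / N)
    (ha₁ : a₁ = (σ + γ) * (α / N + γ) + σ * γ)
    (ha₀ : a₀ = σ * γ * (α / N + γ - β * (1 - ρ))) :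
    (∀ z : ℂ, z ^ 3 + (a₂ : ℂ) * z ^ 2 + (a₁ : ℂ) * z + (a₀ : ℂ) = 0 → z.re < 0) ↔
      R₀ < 1 := by
  have hg : 0 ≤ α / N := div_nonneg hα hN.le
  have hβρ : 0 < β * (1 - ρ) := mul_pos hβ (by linarith)
  have hkey : a₀ = σ * γ ^ 2 * (1 - R₀) := by
    rw [hR₀, ha₀]; field_simp; ring
  have hσγγ : 0 < σ * γ ^ 2 := by positivity
  have ha0_iff : 0 < a₀ ↔ R₀ < 1 := by
    rw [hkey]
    constructor
    · intro h; nlinarith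
    · intro h; nlinarith
  have ha2 : 0 < a₂ := by rw [ha₂]; linarith
  have ha1 : 0 < a₁ := by rw [ha₁]; nlinarith
  have hHW : a₀ < a₂ * a₁ := by
    rw [ha₀, ha₂, ha₁]
    nlinarith [mul_pos hσ hγ, mul_pos (mul_pos hσ hγ) hβρ, hg,
      mul_nonneg hg hg, mul_pos hγ hγ,
      mul_nonneg (mul_nonneg hg hσ.le) hγ.le]
  set f : ℝ → ℝ := fun x => x ^ 3 + a₂ * x ^ 2 + a₁ * x + a₀ with hf
  have hcont : Continuous f := by fun_prop
  constructor
  · -- all roots stable → R₀ < 1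
    intro hall
    rw [← ha0_iff]
    by_contra h
    push_neg at h
    set M : ℝ := 1 - a₀ with hM
    have hM1 : 1 ≤ M := by rw [hM]; linarith
    have hfM : 0 < f M := by
      simp only [hf]
      nlinarith [sq_nonneg M, sq_nonneg (M - 1), mul_pos ha2 (mul_pos
        (lt_of_lt_of_le one_pos hM1) (lt_of_lt_of_le one_pos hM1))]
    have h0M : (0:ℝ) ≤ M := by linarith
    have hmem : (0:ℝ) ∈ Set.Icc (f 0) (f M) := by
      constructor
      · show (0:ℝ)^3 + a₂ * 0^2 + a₁ * 0 + a₀ ≤ 0; nlinarith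
      · exact hfM.le
    obtain ⟨r, hrmem, hfr⟩ := intermediate_value_Icc h0M hcont.continuousOn hmem
    have hfr' : r ^ 3 + a₂ * r ^ 2 + a₁ * r + a₀ = 0 := hfr
    have hzero : (r : ℂ) ^ 3 + (a₂ : ℂ) * (r : ℂ) ^ 2 + (a₁ : ℂ) * r + (a₀ : ℂ) = 0 := by
      exact_mod_cast congrArg (Complex.ofReal ·) hfr'
    have := hall r hzero
    rw [Complex.ofReal_re] at this
    linarith [hrmem.1]
  · -- R₀ < 1 → all roots stable
    intro hR
    have ha0 : 0 < a₀ := ha0_iff.mpr hR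
    set M : ℝ := a₂ + a₁ + a₀ + 1 with hM
    have hM1 : 1 ≤ M := by rw [hM]; linarith
    have hMa : a₂ + 1 ≤ M := by rw [hM]; linarith
    have hfM : f (-M) < 0 := by
      simp only [hf]
      have hid : (-M) ^ 3 + a₂ * (-M) ^ 2 + a₁ * (-M) + a₀
          = -(M ^ 2 * (M - a₂)) - a₁ * M + a₀ := by ring
      rw [hid]
      have h1 : 1 ≤ M - a₂ := by linarith
      have h2 : M ≤ M ^ 2 := by nlinarith
      have h3 : M ^ 2 ≤ M ^ 2 * (M - a₂) := by nlinarith [sq_nonneg M]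
      nlinarith [mul_pos ha1 (lt_of_lt_of_le one_pos hM1)]
    have hmem : (0:ℝ) ∈ Set.Icc (f (-M)) (f 0) := by
      constructor
      · exact hfM.le
      · show (0:ℝ) ≤ (0:ℝ)^3 + a₂ * 0^2 + a₁ * 0 + a₀; nlinarith
    obtain ⟨r, hrmem, hfr⟩ := intermediate_value_Icc (by linarith : -M ≤ (0:ℝ))
      hcont.continuousOn hmem
    have hfr' : r ^ 3 + a₂ * r ^ 2 + a₁ * r + a₀ = 0 := hfr
    have hr0 : r < 0 := by
      rcases lt_or_eq_of_le hrmem.2 with h | h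
      · exact h
      · exfalso; rw [h] at hfr'; simp at hfr'; linarith
    set b : ℝ := r + a₂ with hb
    set c : ℝ := r ^ 2 + a₂ * r + a₁ with hc
    have hac : a₀ = -r * c := by rw [hc]; linear_combination hfr'
    have hcpos : 0 < c := by
      have h' : 0 < -r * c := hac ▸ ha0
      rcases mul_pos_iff.mp h' with ⟨_, h2⟩ | ⟨h1, _⟩
      · exact h2
      · linarith
    have hbpos : 0 < b := by
      have hid : a₂ * a₁ - a₀ = b * (a₁ + r ^ 2) := by
        rw [hb]; linear_combination -hfr'
      have h' : 0 < b * (a₁ + r ^ 2) := by rw [← hid]; linarith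
      rcases mul_pos_iff.mp h' with ⟨h1, _⟩ | ⟨_, h2⟩
      · exact h1
      · nlinarith [sq_nonneg r]
    intro z hz
    have hzero : (r : ℂ) ^ 3 + (a₂ : ℂ) * (r : ℂ) ^ 2 + (a₁ : ℂ) * r + (a₀ : ℂ) = 0 := by
      exact_mod_cast congrArg (Complex.ofReal ·) hfr'
    have hfac : (z - (r : ℂ)) * (z ^ 2 + (b : ℂ) * z + (c : ℂ)) = 0 := by
      push_cast [hb, hc]
      linear_combination hz - hzero
    rcases mul_eq_zero.mp hfac with h | h
    · have hz' : z = (r : ℂ) := sub_eq_zero.mp h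
      rw [hz', Complex.ofReal_re]; exact hr0
    · exact quad_root_neg_re b c hbpos hcpos z h
end
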